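/- (Elliptical potential / pigeonhole, reciprocal square-root counts) Let 𝒳 be a finite set with |𝒳| = M, let K ≥ 1, and let x₁, …, x_K be any sequence in 𝒳. Define the visitation counts N_k(x) = max(1, #{i < k : x_i = x}). Then Σ_{k=1}^K 1/√(N_k(x_k)) ≤ √(K · M(2 + log K)). -/

import Mathlib

open Finset

/-- Harmonic-type bound: `∑_{j<n} 1/max(1,j) ≤ 2 + log(n-1)`. -/
private lemma harm_aux (n : ℕ) :
    ∑ j ∈ Finset.range n, (1 : ℝ) / ((max 1 j : ℕ) : ℝ) ≤ 2 + Real.log (n - 1 : ℕ) := by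
  induction n with
  | zero => simp
  | succ m ih =>
    rw [Finset.sum_range_succ]
    rcases Nat.lt_or_ge m 2 with hm | hm
    · interval_cases m <;> norm_num
    · have hm1 : (1 : ℝ) ≤ (m : ℝ) - 1 := by
        have : (2 : ℝ) ≤ (m : ℝ) := by exact_mod_cast hm
        linarith
      have hmpos : (0 : ℝ) < (m : ℝ) := by linarith
      have hcast : ((m - 1 : ℕ) : ℝ) = (m : ℝ) - 1 := by
        have : 1 ≤ m := by omega
        push_cast [this]; ring
      have hlog : (1 : ℝ) / (m : ℝ) ≤ Real.log m - Real.log ((m - 1 : ℕ)) := by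
        have h1 : Real.log (((m : ℝ) - 1) / m) ≤ ((m : ℝ) - 1) / m - 1 := by
          apply Real.log_le_sub_one_of_pos
          positivity
        rw [Real.log_div (by linarith) (by positivity)] at h1
        rw [hcast]
        have : ((m : ℝ) - 1) / m - 1 = -(1 / m) := by field_simp; ring
        rw [this] at h1
        linarith
      have hmax : (max 1 m : ℕ) = m := by omega
      have hsucc : ((m + 1 - 1 : ℕ) : ℝ) = (m : ℝ) := by norm_num
      rw [hmax, hsucc]
      linarith

/-- `∑_{j<n} 1/max(1,j) ≤ 2 + log K` whenever `n ≤ K` and `1 ≤ K`. -/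
private lemma harm (n K : ℕ) (hn : n ≤ K) (hK : 1 ≤ K) :
    ∑ j ∈ Finset.range n, (1 : ℝ) / ((max 1 j : ℕ) : ℝ) ≤ 2 + Real.log K := by
  refine (harm_aux n).trans ?_
  have hlogK : 0 ≤ Real.log K := Real.log_nonneg (by exact_mod_cast hK)
  rcases Nat.eq_zero_or_pos (n - 1) with h | h
  · rw [h]; simpa using hlogK
  · have : Real.log ((n - 1 : ℕ)) ≤ Real.log K := by
      apply Real.log_le_log (by exact_mod_cast h)
      exact_mod_cast Nat.le_trans (Nat.sub_le n 1) hn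
    linarith

theorem elliptical_potential_reciprocal_sqrt {𝒳 : Type*} [Fintype 𝒳] [DecidableEq 𝒳]
    (M K : ℕ) (hM : Fintype.card 𝒳 = M) (hK : 1 ≤ K) (x : Fin K → 𝒳) :
    ∑ k : Fin K,
        (1 : ℝ) / Real.sqrt ((max 1 ((Finset.univ.filter (fun i : Fin K => i < k ∧ x i = x k)).card) : ℕ) : ℝ)
      ≤ Real.sqrt (K * (M * (2 + Real.log K))) := by
  classical
  set N : Fin K → ℕ := fun k => max 1 ((Finset.univ.filter (fun i : Fin K => i < k ∧ x i = x k)).card) with hN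
  have hN1 : ∀ k, 1 ≤ N k := fun k => le_max_left _ _
  have hNpos : ∀ k, (0 : ℝ) < (N k : ℝ) := fun k => by exact_mod_cast (hN1 k)
  -- Step 1: the sum of reciprocals of counts is at most M * (2 + log K)
  have key : ∑ k : Fin K, (1 : ℝ) / (N k : ℝ) ≤ M * (2 + Real.log K) := by
    have hfib := Finset.sum_fiberwise (Finset.univ : Finset (Fin K)) x
      (fun k => (1 : ℝ) / (N k : ℝ))
    rw [← hfib]
    have hbound : ∀ v : 𝒳,
        ∑ k ∈ Finset.univ.filter (fun k => x k = v), (1 : ℝ) / (N k : ℝ)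
          ≤ 2 + Real.log K := by
      intro v
      set S : Finset (Fin K) := Finset.univ.filter (fun k => x k = v) with hS
      set c : Fin K → ℕ := fun k => (S.filter (fun i => i < k)).card with hc
      -- on S the count agrees with c
      have hcount : ∀ k ∈ S, N k = max 1 (c k) := by
        intro k hk
        have hxk : x k = v := by simpa [hS] using hk
        have : (Finset.univ.filter (fun i : Fin K => i < k ∧ x i = x k))
            = S.filter (fun i => i < k) := by
          ext i
          simp [hS, hxk, Finset.mem_filter, and_comm]
        simp [hN, this, hc]
      -- c is strictly monotone on S
      have hmono : ∀ k ∈ S, ∀ k' ∈ S, k < k' → c k < c k' := by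
        intro k hk k' _ hkk'
        have hsub : insert k (S.filter (fun i => i < k)) ⊆ S.filter (fun i => i < k') := by
          intro i hi
          rcases Finset.mem_insert.mp hi with rfl | hi
          · exact Finset.mem_filter.mpr ⟨hk, hkk'⟩
          · rcases Finset.mem_filter.mp hi with ⟨hiS, hik⟩
            exact Finset.mem_filter.mpr ⟨hiS, hik.trans hkk'⟩
        have hknot : k ∉ S.filter (fun i => i < k) := by
          simp [Finset.mem_filter]
        calc c k < c k + 1 := Nat.lt_succ_self _
          _ = (insert k (S.filter (fun i => i < k))).card := by
              rw [Finset.card_insert_of_notMem hknot]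
          _ ≤ c k' := Finset.card_le_card hsub
      have hinj : Set.InjOn c S := by
        intro a ha b hb hab
        rcases lt_trichotomy a b with h | h | h
        · exact absurd hab (hmono a ha b hb h).ne
        · exact h
        · exact absurd hab.symm (hmono b hb a ha h).ne
      -- image of c on S sits inside range S.card
      have himg : ∀ k ∈ S, c k ∈ Finset.range S.card := by
        intro k hk
        refine Finset.mem_range.mpr (Finset.card_lt_card ?_)
        refine (Finset.ssubset_iff_of_subset (Finset.filter_subset _ _)).mpr ?_
        exact ⟨k, hk, by simp⟩
      calc ∑ k ∈ S, (1 : ℝ) / (N k : ℝ)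
          = ∑ k ∈ S, (1 : ℝ) / ((max 1 (c k) : ℕ) : ℝ) := by
            refine Finset.sum_congr rfl fun k hk => by rw [hcount k hk]
        _ = ∑ j ∈ S.image c, (1 : ℝ) / ((max 1 j : ℕ) : ℝ) := by
            rw [Finset.sum_image (fun a ha b hb => hinj ha hb)]
        _ ≤ ∑ j ∈ Finset.range S.card, (1 : ℝ) / ((max 1 j : ℕ) : ℝ) := by
            refine Finset.sum_le_sum_of_subset_of_nonneg ?_ fun j _ _ => by positivity
            intro j hj
            rcases Finset.mem_image.mp hj with ⟨k, hk, rfl⟩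
            exact himg k hk
        _ ≤ 2 + Real.log K := by
            refine harm S.card K ?_ hK
            calc S.card ≤ (Finset.univ : Finset (Fin K)).card := Finset.card_le_card (Finset.subset_univ _)
              _ = K := by simp
    calc ∑ v : 𝒳, ∑ k ∈ Finset.univ.filter (fun k => x k = v), (1 : ℝ) / (N k : ℝ)
        ≤ ∑ _v : 𝒳, (2 + Real.log K) := Finset.sum_le_sum fun v _ => hbound v
      _ = M * (2 + Real.log K) := by
          rw [Finset.sum_const, Finset.card_univ, hM, nsmul_eq_mul]
  -- Step 2: Cauchy–Schwarz
  have hlogK : 0 ≤ Real.log K := Real.log_nonneg (by exact_mod_cast hK)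
  have hsq : (∑ k : Fin K, (1 : ℝ) / Real.sqrt (N k : ℝ)) ^ 2
      ≤ K * (M * (2 + Real.log K)) := by
    have hCS := sq_sum_le_card_mul_sum_sq
      (s := (Finset.univ : Finset (Fin K))) (f := fun k => (1 : ℝ) / Real.sqrt (N k : ℝ))
    have hterm : ∀ k : Fin K, ((1 : ℝ) / Real.sqrt (N k : ℝ)) ^ 2 = 1 / (N k : ℝ) := by
      intro k
      rw [div_pow, one_pow, Real.sq_sqrt (hNpos k).le]
    rw [Finset.sum_congr rfl (fun k _ => hterm k)] at hCS
    calc (∑ k : Fin K, (1 : ℝ) / Real.sqrt (N k : ℝ)) ^ 2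
        ≤ (Finset.univ : Finset (Fin K)).card * ∑ k : Fin K, (1 : ℝ) / (N k : ℝ) := hCS
      _ = K * ∑ k : Fin K, (1 : ℝ) / (N k : ℝ) := by simp
      _ ≤ K * (M * (2 + Real.log K)) := by
          apply mul_le_mul_of_nonneg_left key (by positivity)
  have hsum_nonneg : 0 ≤ ∑ k : Fin K, (1 : ℝ) / Real.sqrt (N k : ℝ) := by
    apply Finset.sum_nonneg; intro k _; positivity
  calc ∑ k : Fin K, (1 : ℝ) / Real.sqrt (N k : ℝ)
      = Real.sqrt ((∑ k : Fin K, (1 : ℝ) / Real.sqrt (N k : ℝ)) ^ 2) :=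
        (Real.sqrt_sq hsum_nonneg).symm
    _ ≤ Real.sqrt (K * (M * (2 + Real.log K))) := Real.sqrt_le_sqrt hsq
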